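/- (Continuity of the integral in the partition norm) Let u < v be real numbers and let f : [u,v]_ℚ → ℝ be uniformly continuous, and let L = (ℚ)∫_u^v f be its integral. Then for every ε > 0 there exists δ > 0 such that for every tagged partition P of [u,v]_ℚ (real tags in the closed subintervals allowed, with f evaluated via its continuous extension) with Δ(P) ≤ δ one has |R(f, P) − L| ≤ ε. -/

import Mathlib

open Filter Topology

/-- The rational interval [u,v]_ℚ = {a ∈ ℚ : u ≤ a ≤ v}. -/
def RatIcc (u v : ℝ) : Set ℚ := {a : ℚ | u ≤ (a : ℝ) ∧ (a : ℝ) ≤ v}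

/-- Uniform continuity of f : M → ℝ for M ⊆ ℚ. -/
def UC (M : Set ℚ) (f : ℚ → ℝ) : Prop :=
  ∀ ε : ℝ, 0 < ε → ∃ δ : ℝ, 0 < δ ∧
    ∀ a ∈ M, ∀ b ∈ M, |(a : ℝ) - (b : ℝ)| ≤ δ → |f a - f b| ≤ ε

/-- A tagged partition of [u,v]_ℚ: real partition points u = u₀ < u₁ < … < u_n = v
with rational tags b_i ∈ [u_{i−1}, u_i]_ℚ. -/
structure TaggedPartition (u v : ℝ) where
  n : ℕ
  pts : Fin (n + 1) → ℝ
  mono : StrictMono pts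
  first : pts 0 = u
  last : pts (Fin.last n) = v
  tags : Fin n → ℚ
  tag_lb : ∀ i : Fin n, pts i.castSucc ≤ (tags i : ℝ)
  tag_ub : ∀ i : Fin n, (tags i : ℝ) ≤ pts i.succ

/-- The norm Δ(P) of a tagged partition: the largest subinterval length. -/
noncomputable def TaggedPartition.norm {u v : ℝ} (P : TaggedPartition u v) : ℝ :=
  ⨆ i : Fin P.n, (P.pts i.succ - P.pts i.castSucc)

/-- The Riemann sum R(f, P). -/
noncomputable def TaggedPartition.riemannSum {u v : ℝ} (P : TaggedPartition u v)
    (f : ℚ → ℝ) : ℝ :=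
  ∑ i : Fin P.n, f (P.tags i) * (P.pts i.succ - P.pts i.castSucc)

/-- y is the extended value of f at x: every sequence in M converging to x has
f-images converging to y. -/
def ExtVal (M : Set ℚ) (f : ℚ → ℝ) (x y : ℝ) : Prop :=
  ∀ a : ℕ → ℚ, (∀ n, a n ∈ M) →
    Tendsto (fun n => ((a n : ℝ))) atTop (𝓝 x) →
    Tendsto (fun n => f (a n)) atTop (𝓝 y)

/-- A tagged partition of [u,v]_ℚ with real tags b_i ∈ [u_{i−1}, u_i]. -/
structure RealTaggedPartition (u v : ℝ) where
  n : ℕ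
  pts : Fin (n + 1) → ℝ
  mono : StrictMono pts
  first : pts 0 = u
  last : pts (Fin.last n) = v
  tags : Fin n → ℝ
  tag_lb : ∀ i : Fin n, pts i.castSucc ≤ tags i
  tag_ub : ∀ i : Fin n, tags i ≤ pts i.succ

/-- The norm Δ(P) of a real-tagged partition. -/
noncomputable def RealTaggedPartition.norm {u v : ℝ} (P : RealTaggedPartition u v) : ℝ :=
  ⨆ i : Fin P.n, (P.pts i.succ - P.pts i.castSucc)

/-! ### Auxiliary lemmas -/

lemma aux_telescope {n : ℕ} (pts : Fin (n + 1) → ℝ) :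
    ∑ i : Fin n, (pts i.succ - pts i.castSucc) = pts (Fin.last n) - pts 0 := by
  induction n with
  | zero => simp
  | succ m ih =>
      rw [Fin.sum_univ_castSucc]
      have h := ih (pts ∘ Fin.castSucc)
      simp only [Function.comp] at h
      have h2 : ∀ i : Fin m, (pts (i.castSucc.succ) - pts (i.castSucc.castSucc))
          = (pts (i.succ.castSucc) - pts (i.castSucc.castSucc)) := by
        intro i; rw [Fin.succ_castSucc]
      calc (∑ i : Fin m, (pts (i.castSucc.succ) - pts (i.castSucc.castSucc)))
            + (pts (Fin.last m).succ - pts (Fin.last m).castSucc)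
          = (pts ((Fin.last m).castSucc) - pts 0)
            + (pts (Fin.last (m+1)) - pts ((Fin.last m).castSucc)) := by
            rw [Finset.sum_congr rfl (fun i _ => h2 i)]
            rw [show ∑ i : Fin m, (pts (i.succ.castSucc) - pts (i.castSucc.castSucc))
                = pts ((Fin.last m).castSucc) - pts (Fin.castSucc 0) from h]
            rw [Fin.succ_last]
            simp [Fin.castSucc_zero]
        _ = pts (Fin.last (m+1)) - pts 0 := by ring

lemma TaggedPartition.n_pos {u v : ℝ} (huv : u < v) (P : TaggedPartition u v) : 0 < P.n := by
  rcases Nat.eq_zero_or_pos P.n with h | h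
  · exfalso
    have h1 := P.first
    have h2 := P.last
    have h3 : (0 : Fin (P.n + 1)) = Fin.last P.n := by
      apply Fin.ext; simp [h]
    rw [← h3, h1] at h2
    exact absurd h2 (ne_of_lt huv)
  · exact h

lemma RealTaggedPartition.n_pos {u v : ℝ} (huv : u < v) (P : RealTaggedPartition u v) :
    0 < P.n := by
  rcases Nat.eq_zero_or_pos P.n with h | h
  · exfalso
    have h1 := P.first
    have h2 := P.last
    have h3 : (0 : Fin (P.n + 1)) = Fin.last P.n := by
      apply Fin.ext; simp [h]
    rw [← h3, h1] at h2
    exact absurd h2 (ne_of_lt huv)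
  · exact h

lemma TaggedPartition.len_le_norm {u v : ℝ} (P : TaggedPartition u v) (i : Fin P.n) :
    P.pts i.succ - P.pts i.castSucc ≤ P.norm :=
  le_ciSup (Set.Finite.bddAbove (Set.finite_range
    (fun j : Fin P.n => P.pts j.succ - P.pts j.castSucc))) i

lemma RealTaggedPartition.len_le_norm {u v : ℝ} (P : RealTaggedPartition u v) (i : Fin P.n) :
    P.pts i.succ - P.pts i.castSucc ≤ P.norm :=
  le_ciSup (Set.Finite.bddAbove (Set.finite_range
    (fun j : Fin P.n => P.pts j.succ - P.pts j.castSucc))) i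

lemma TaggedPartition.norm_nonneg {u v : ℝ} (huv : u < v) (P : TaggedPartition u v) :
    0 ≤ P.norm := by
  have hn := P.n_pos huv
  set i0 : Fin P.n := ⟨0, hn⟩
  have h1 : P.pts i0.castSucc < P.pts i0.succ := P.mono (Fin.castSucc_lt_succ : i0.castSucc < i0.succ)
  have := P.len_le_norm i0
  linarith

/-- Step A: any rational-tagged partition of small norm has Riemann sum close to L. -/
lemma stepA (u v : ℝ) (huv : u < v) (f : ℚ → ℝ) (L : ℝ)
    (hL : ∀ P : ℕ → TaggedPartition u v,
      Tendsto (fun k => (P k).norm) atTop (𝓝 0) →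
      Tendsto (fun k => (P k).riemannSum f) atTop (𝓝 L)) :
    ∀ ε : ℝ, 0 < ε → ∃ δ : ℝ, 0 < δ ∧
      ∀ P : TaggedPartition u v, P.norm ≤ δ → |P.riemannSum f - L| ≤ ε := by
  intro ε hε
  by_contra hcon
  push_neg at hcon
  have hex : ∀ k : ℕ, ∃ P : TaggedPartition u v,
      P.norm ≤ 1 / (k + 1) ∧ ε < |P.riemannSum f - L| := by
    intro k
    obtain ⟨P, h1, h2⟩ := hcon (1 / (k + 1)) (by positivity)
    exact ⟨P, h1, h2⟩
  choose P h1 h2 using hex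
  have hnorm : Tendsto (fun k => (P k).norm) atTop (𝓝 0) := by
    apply squeeze_zero (fun k => (P k).norm_nonneg huv) h1
    exact tendsto_one_div_add_atTop_nhds_zero_nat
  have hsum := hL P hnorm
  rw [Metric.tendsto_atTop] at hsum
  obtain ⟨N, hN⟩ := hsum ε hε
  have := hN N le_rfl
  rw [Real.dist_eq] at this
  exact absurd this (not_lt.mpr (h2 N).le)

/-- Continuity of the integral in the partition norm: if L is the integral of the UC
function f on [u,v]_ℚ, then for every ε > 0 there is δ > 0 such that every tagged
partition (real tags allowed, f evaluated via its extended values) of norm ≤ δ has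
Riemann sum within ε of L. -/
theorem integral_continuity (u v : ℝ) (huv : u < v) (f : ℚ → ℝ)
    (hf : UC (RatIcc u v) f) (L : ℝ)
    (hL : ∀ P : ℕ → TaggedPartition u v,
      Tendsto (fun k => (P k).norm) atTop (𝓝 0) →
      Tendsto (fun k => (P k).riemannSum f) atTop (𝓝 L)) :
    ∀ ε : ℝ, 0 < ε → ∃ δ : ℝ, 0 < δ ∧
      ∀ P : RealTaggedPartition u v, ∀ g : Fin P.n → ℝ,
        (∀ i : Fin P.n, ExtVal (RatIcc u v) f (P.tags i) (g i)) →
        P.norm ≤ δ →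
        |(∑ i : Fin P.n, g i * (P.pts i.succ - P.pts i.castSucc)) - L| ≤ ε := by
  intro ε hε
  obtain ⟨δ, hδ, hδ'⟩ := stepA u v huv f L hL (ε / 2) (by positivity)
  refine ⟨δ, hδ, ?_⟩
  intro P g hg hnorm
  have hvu : (0 : ℝ) < v - u := by linarith
  set ε2 : ℝ := ε / (2 * (v - u)) with hε2def
  have hε2 : 0 < ε2 := by positivity
  -- choose good rational tags
  have hclaim : ∀ i : Fin P.n, ∃ q : ℚ,
      P.pts i.castSucc ≤ (q : ℝ) ∧ (q : ℝ) ≤ P.pts i.succ ∧ |f q - g i| ≤ ε2 := by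
    intro i
    set c := P.pts i.castSucc with hc
    set d := P.pts i.succ with hd
    set t := P.tags i with ht
    have hcd : c < d := P.mono (Fin.castSucc_lt_succ : i.castSucc < i.succ)
    have hct : c ≤ t := P.tag_lb i
    have htd : t ≤ d := P.tag_ub i
    have huc : u ≤ c := by
      rw [← P.first]; exact P.mono.monotone (Fin.zero_le _)
    have hdv : d ≤ v := by
      rw [← P.last]; exact P.mono.monotone (Fin.le_last _)
    have hexq : ∀ n : ℕ, ∃ q : ℚ,
        max c (t - 1 / (n + 1)) < (q : ℝ) ∧ (q : ℝ) < min d (t + 1 / (n + 1)) := by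
      intro n
      apply exists_rat_btwn
      have hη : (0 : ℝ) < 1 / (n + 1) := by positivity
      rw [max_lt_iff, lt_min_iff, lt_min_iff]
      constructor <;> constructor <;> linarith
    choose q hq1 hq2 using hexq
    have hmem : ∀ n, q n ∈ RatIcc u v := by
      intro n
      constructor
      · have := le_max_left c (t - 1 / (n + 1 : ℝ))
        have := hq1 n
        simp only [max_lt_iff] at this ⊢
        linarith [(hq1 n).trans_le' (le_max_left c (t - 1 / (n + 1 : ℝ)))]
      · have h := (hq2 n).trans_le (min_le_left d _)
        linarith
    have htend : Tendsto (fun n => ((q n : ℝ))) atTop (𝓝 t) := by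
      have hlow : Tendsto (fun n : ℕ => t - 1 / (n + 1 : ℝ)) atTop (𝓝 t) := by
        simpa using (tendsto_const_nhds : Tendsto (fun _ : ℕ => t) atTop (𝓝 t)).sub tendsto_one_div_add_atTop_nhds_zero_nat
      have hhigh : Tendsto (fun n : ℕ => t + 1 / (n + 1 : ℝ)) atTop (𝓝 t) := by
        simpa using (tendsto_const_nhds : Tendsto (fun _ : ℕ => t) atTop (𝓝 t)).add tendsto_one_div_add_atTop_nhds_zero_nat
      refine tendsto_of_tendsto_of_tendsto_of_le_of_le hlow hhigh ?_ ?_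
      · intro n
        exact ((le_max_right c _).trans (hq1 n).le)
      · intro n
        exact ((hq2 n).le.trans (min_le_right d _))
    have hftend := hg i q hmem htend
    rw [Metric.tendsto_atTop] at hftend
    obtain ⟨N, hN⟩ := hftend ε2 hε2
    refine ⟨q N, ?_, ?_, ?_⟩
    · exact (le_max_left c _).trans (hq1 N).le
    · exact (hq2 N).le.trans (min_le_left d _)
    · have := hN N le_rfl
      rw [Real.dist_eq] at this
      exact this.le
  choose a ha1 ha2 ha3 using hclaim
  set Q : TaggedPartition u v :=
    ⟨P.n, P.pts, P.mono, P.first, P.last, a, ha1, ha2⟩ with hQ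
  have hQnorm : Q.norm ≤ δ := hnorm
  have hQsum := hδ' Q hQnorm
  have hlen : ∀ i : Fin P.n, 0 ≤ P.pts i.succ - P.pts i.castSucc := by
    intro i
    have := P.mono (Fin.castSucc_lt_succ : i.castSucc < i.succ)
    linarith
  have hdiff : |(∑ i : Fin P.n, g i * (P.pts i.succ - P.pts i.castSucc))
      - Q.riemannSum f| ≤ ε / 2 := by
    have heq : (∑ i : Fin P.n, g i * (P.pts i.succ - P.pts i.castSucc))
        - Q.riemannSum f
        = ∑ i : Fin P.n, (g i - f (a i)) * (P.pts i.succ - P.pts i.castSucc) := by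
      rw [TaggedPartition.riemannSum, ← Finset.sum_sub_distrib]
      exact Finset.sum_congr rfl (fun i _ => by ring)
    rw [heq]
    calc |∑ i : Fin P.n, (g i - f (a i)) * (P.pts i.succ - P.pts i.castSucc)|
        ≤ ∑ i : Fin P.n, |(g i - f (a i)) * (P.pts i.succ - P.pts i.castSucc)| :=
          Finset.abs_sum_le_sum_abs _ _
      _ ≤ ∑ i : Fin P.n, ε2 * (P.pts i.succ - P.pts i.castSucc) := by
          apply Finset.sum_le_sum
          intro i _
          rw [abs_mul, abs_of_nonneg (hlen i)]
          apply mul_le_mul_of_nonneg_right _ (hlen i)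
          calc |g i - f (a i)| = |f (a i) - g i| := abs_sub_comm _ _
            _ ≤ ε2 := ha3 i
      _ = ε2 * (v - u) := by
          rw [← Finset.mul_sum, aux_telescope P.pts, P.first, P.last]
      _ = ε / 2 := by
          rw [hε2def]
          field_simp
  calc |(∑ i : Fin P.n, g i * (P.pts i.succ - P.pts i.castSucc)) - L|
      ≤ |(∑ i : Fin P.n, g i * (P.pts i.succ - P.pts i.castSucc))
          - Q.riemannSum f| + |Q.riemannSum f - L| := abs_sub_le _ _ _
    _ ≤ ε / 2 + ε / 2 := add_le_add hdiff hQsum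
    _ = ε := by ring
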